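/- Key differential inequality for the spectral function: Let n ≥ 1 be an integer and k ≥ 2 an integer. For every x ∈ (0, n), α_k(x)² − α_k′(x) − (2/x) α_k(x) ≥ Σ_{j=1}^{k−1} 2(n+j)(n+2j) / ( (n−x)(n+j−x)(j+x)² ), and in particular the left-hand side is strictly positive. -/

import Mathlib

open Real

/-- `β_j(x) = 1/(n + j − x) + 1/(j + x)`. -/
noncomputable def betaFun (n j : ℕ) (x : ℝ) : ℝ :=
  1 / ((n : ℝ) + j - x) + 1 / ((j : ℝ) + x)

/-- `α_k(x) = Σ_{j=0}^{k−1} β_j(x)`. -/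
noncomputable def alphaFun (n k : ℕ) (x : ℝ) : ℝ :=
  ∑ j ∈ Finset.range k, betaFun n j x

lemma betaFun_hasDerivAt (n j : ℕ) (x : ℝ) (h1 : (n : ℝ) + j - x ≠ 0)
    (h2 : (j : ℝ) + x ≠ 0) :
    HasDerivAt (betaFun n j) (1 / ((n:ℝ)+j-x)^2 - 1 / ((j:ℝ)+x)^2) x := by
  have ha : HasDerivAt (fun y : ℝ => (n:ℝ) + j - y) (-1) x := by
    simpa using ((hasDerivAt_id x).const_sub ((n:ℝ)+j))
  have hb : HasDerivAt (fun y : ℝ => (j:ℝ) + y) 1 x := by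
    simpa using ((hasDerivAt_id x).const_add ((j:ℝ)))
  have hA := ha.inv h1
  have hB := hb.inv h2
  have h := hA.add hB
  have heq : - -1 / ((n:ℝ)+j-x) ^ 2 + -1 / ((j:ℝ)+x) ^ 2
      = 1 / ((n:ℝ)+j-x)^2 - 1 / ((j:ℝ)+x)^2 := by ring
  rw [← heq]
  have hfun : betaFun n j = fun y => ((n:ℝ)+j-y)⁻¹ + ((j:ℝ)+y)⁻¹ := by
    funext y; simp [betaFun, one_div]
  rw [hfun]
  exact h

lemma alphaFun_hasDerivAt (n k : ℕ) (x : ℝ)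
    (h : ∀ j : ℕ, ((n : ℝ) + j - x ≠ 0) ∧ ((j : ℝ) + x ≠ 0)) :
    HasDerivAt (alphaFun n k)
      (∑ j ∈ Finset.range k, (1 / ((n:ℝ)+j-x)^2 - 1 / ((j:ℝ)+x)^2)) x := by
  have := HasDerivAt.fun_sum (fun j (_ : j ∈ Finset.range k) =>
    betaFun_hasDerivAt n j x (h j).1 (h j).2)
  show HasDerivAt (fun y => ∑ j ∈ Finset.range k, betaFun n j y) _ x
  simpa [alphaFun] using this

/-- Key differential inequality for the spectral function. -/
theorem alphaFun_diff_ineq (n k : ℕ) (hn : 1 ≤ n) (hk : 2 ≤ k) :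
    ∀ x ∈ Set.Ioo (0 : ℝ) (n : ℝ),
      (alphaFun n k x) ^ 2 - deriv (alphaFun n k) x - 2 / x * alphaFun n k x
          ≥ ∑ j ∈ Finset.Icc 1 (k - 1),
              2 * ((n : ℝ) + j) * ((n : ℝ) + 2 * j) /
                (((n : ℝ) - x) * ((n : ℝ) + j - x) * ((j : ℝ) + x) ^ 2) ∧
      0 < (alphaFun n k x) ^ 2 - deriv (alphaFun n k) x - 2 / x * alphaFun n k x := by
  rintro x ⟨hx0, hxn⟩
  -- basic positivity
  have hna : ∀ j : ℕ, (0:ℝ) < (n:ℝ) + j - x := fun j => by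
    have : (0:ℝ) ≤ (j:ℝ) := Nat.cast_nonneg j
    linarith
  have hb : ∀ j : ℕ, (0:ℝ) < (j:ℝ) + x := fun j => by
    have : (0:ℝ) ≤ (j:ℝ) := Nat.cast_nonneg j
    linarith
  set a : ℕ → ℝ := fun j => 1 / ((n:ℝ) + j - x) with ha_def
  set b : ℕ → ℝ := fun j => 1 / ((j:ℝ) + x) with hb_def
  have hapos : ∀ j, 0 < a j := fun j => div_pos one_pos (hna j)
  have hbpos : ∀ j, 0 < b j := fun j => div_pos one_pos (hb j)
  -- derivative
  have hderiv : deriv (alphaFun n k) x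
      = ∑ j ∈ Finset.range k, ((a j)^2 - (b j)^2) := by
    have := (alphaFun_hasDerivAt n k x (fun j => ⟨(hna j).ne', (hb j).ne'⟩)).deriv
    rw [this]
    apply Finset.sum_congr rfl
    intro j _
    simp [ha_def, hb_def, div_pow]
  -- decompose range k = {0} ∪ Icc 1 (k-1)
  have hrange : Finset.range k = insert 0 (Finset.Icc 1 (k-1)) := by
    ext m
    simp only [Finset.mem_range, Finset.mem_insert, Finset.mem_Icc]
    omega
  have h0notin : (0 : ℕ) ∉ Finset.Icc 1 (k-1) := by simp
  set t : ℕ → ℝ := fun j => betaFun n j x with ht_def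
  have htab : ∀ j, t j = a j + b j := fun j => rfl
  set S : ℝ := ∑ j ∈ Finset.Icc 1 (k-1), t j with hS_def
  have halpha : alphaFun n k x = t 0 + S := by
    rw [alphaFun, hrange, Finset.sum_insert h0notin]
  have hD : deriv (alphaFun n k) x
      = ((a 0)^2 - (b 0)^2) + ∑ j ∈ Finset.Icc 1 (k-1), ((a j)^2 - (b j)^2) := by
    rw [hderiv, hrange, Finset.sum_insert h0notin]
  have hb0 : b 0 = 1 / x := by simp [hb_def]
  -- LHS = 2 a0 S + S^2 - Σ (a_j^2 - b_j^2)
  have hLHS : (alphaFun n k x) ^ 2 - deriv (alphaFun n k) x - 2 / x * alphaFun n k x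
      = 2 * a 0 * S + S^2 - ∑ j ∈ Finset.Icc 1 (k-1), ((a j)^2 - (b j)^2) := by
    rw [halpha, hD]
    have h2x : 2 / x = 2 * b 0 := by rw [hb0]; ring
    rw [h2x, htab 0]
    ring
  -- each RHS term
  have hterm : ∀ j ∈ Finset.Icc 1 (k-1),
      2 * ((n : ℝ) + j) * ((n : ℝ) + 2 * j) /
          (((n : ℝ) - x) * ((n : ℝ) + j - x) * ((j : ℝ) + x) ^ 2)
        = 2 * a 0 * t j + (t j)^2 - ((a j)^2 - (b j)^2) := by
    intro j _
    have h1 : ((n:ℝ) - x) ≠ 0 := by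
      have := hna 0; push_cast at this ⊢; linarith
    have h2 : ((n:ℝ) + j - x) ≠ 0 := (hna j).ne'
    have h3 : ((j:ℝ) + x) ≠ 0 := (hb j).ne'
    rw [htab, ha_def, hb_def]
    simp only
    have h0 : ((0:ℕ):ℝ) = 0 := by norm_num
    rw [h0, add_zero]
    field_simp
    ring
  have hRHSsum : ∑ j ∈ Finset.Icc 1 (k - 1),
      2 * ((n : ℝ) + j) * ((n : ℝ) + 2 * j) /
          (((n : ℝ) - x) * ((n : ℝ) + j - x) * ((j : ℝ) + x) ^ 2)
      = 2 * a 0 * S + (∑ j ∈ Finset.Icc 1 (k-1), (t j)^2)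
        - ∑ j ∈ Finset.Icc 1 (k-1), ((a j)^2 - (b j)^2) := by
    rw [Finset.sum_congr rfl hterm]
    rw [Finset.sum_sub_distrib, Finset.sum_add_distrib, ← Finset.mul_sum, hS_def]
  have htpos : ∀ j ∈ Finset.Icc 1 (k-1), (0:ℝ) ≤ t j := fun j _ => by
    rw [htab]
    have := hapos j
    have := hbpos j
    linarith
  have hsq : ∑ j ∈ Finset.Icc 1 (k-1), (t j)^2 ≤ S^2 :=
    Finset.sum_sq_le_sq_sum_of_nonneg htpos
  have hge : (alphaFun n k x) ^ 2 - deriv (alphaFun n k) x - 2 / x * alphaFun n k x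
      ≥ ∑ j ∈ Finset.Icc 1 (k - 1),
          2 * ((n : ℝ) + j) * ((n : ℝ) + 2 * j) /
            (((n : ℝ) - x) * ((n : ℝ) + j - x) * ((j : ℝ) + x) ^ 2) := by
    rw [hLHS, hRHSsum]
    linarith
  refine ⟨hge, lt_of_lt_of_le ?_ hge⟩
  apply Finset.sum_pos
  · intro j hj
    have h1 : (0:ℝ) < (n:ℝ) - x := by
      have := hna 0; push_cast at this ⊢; linarith
    have hj1 : 1 ≤ j := (Finset.mem_Icc.mp hj).1
    have : (0:ℝ) < (j:ℝ) := by exact_mod_cast hj1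
    apply div_pos
    · have : (0:ℝ) < (n:ℝ) := by
        have := hna 0
        push_cast at this
        nlinarith [hx0]
      nlinarith
    · exact mul_pos (mul_pos h1 (hna j)) (pow_pos (hb j) 2)
  · exact ⟨1, Finset.mem_Icc.mpr ⟨le_refl 1, by omega⟩⟩
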